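/- arXiv:1011.0584 — 3 statements merged into one kernel-verified Lean document; each statement's English description precedes it below -/
import Mathlib

section
/- Let D be a p-division algebra with centre Z, and let T ⊆ D be a torus of rank d with 1 ∈ T. Then the set Λ of weights of T in D (the Z-linear forms λ : T → Z whose weight space D_λ is nonzero) is an additive subgroup of Hom_Z(T, Z), every weight takes values in the prime field 𝔽_p, and Λ is isomorphic as a group to (ℤ/pℤ)^d; in particular |Λ| = p^d. -/
open Polynomial


private lemma aux_sum_zmod (p : ℕ) [Fact p.Prime] : ∑ b : ZMod p, b ^ (p - 1) = -1 := by
  have hp : p.Prime := Fact.out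
  haveI : NeZero p := ⟨hp.ne_zero⟩
  classical
  have h0 : (0 : ZMod p) ^ (p - 1) = 0 := zero_pow (by have := hp.two_le; omega)
  rw [← Finset.sum_erase (f := fun b : ZMod p => b ^ (p - 1)) Finset.univ h0,
    Finset.sum_congr rfl (fun b hb => ZMod.pow_card_sub_one_eq_one (Finset.ne_of_mem_erase hb)),
    Finset.sum_const, Finset.card_erase_of_mem (Finset.mem_univ _), Finset.card_univ, ZMod.card,
    nsmul_eq_mul, mul_one]
  have h1 : ((p - 1 : ℕ) : ZMod p) = (p : ZMod p) - 1 := by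
    have := hp.two_le; push_cast [Nat.cast_sub (by omega : 1 ≤ p)]; ring
  rw [h1, ZMod.natCast_self, zero_sub]

private lemma aux_sum_identity (p : ℕ) [Fact p.Prime] (Z : Type*) [Field Z] [CharP Z p] :
    ∑ c : ZMod p, ((X : Z[X]) - C (ZMod.castHom (dvd_refl p) Z c)) ^ (p - 1) = -1 := by
  have hp : p.Prime := Fact.out
  haveI : NeZero p := ⟨hp.ne_zero⟩
  set ι : ZMod p →+* Z := ZMod.castHom (dvd_refl p) Z with hι
  have hinj : Function.Injective ι := ZMod.castHom_injective Z
  have key : (∑ c : ZMod p, ((X : Z[X]) - C (ι c)) ^ (p - 1)) + 1 = 0 := by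
    apply Polynomial.eq_zero_of_natDegree_lt_card_of_eval_eq_zero _ hinj
    · intro a
      simp only [eval_add, eval_finset_sum, eval_pow, eval_sub, eval_X, eval_C, eval_one]
      have h2 : ∀ c : ZMod p, (ι a - ι c) ^ (p - 1) = ι ((a - c) ^ (p - 1)) := by
        intro c; rw [map_pow, map_sub]
      rw [Finset.sum_congr rfl (fun c _ => h2 c), ← map_sum]
      have h3 : ∑ c : ZMod p, (a - c) ^ (p - 1) = ∑ b : ZMod p, b ^ (p - 1) :=
        Fintype.sum_equiv (Equiv.subLeft a) _ _ (fun c => rfl)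
      rw [h3, aux_sum_zmod p, map_neg, map_one, neg_add_cancel]
    · rw [ZMod.card]
      have h1 : ∀ c : ZMod p, (((X : Z[X]) - C (ι c)) ^ (p - 1)).natDegree ≤ p - 1 := by
        intro c; rw [natDegree_pow, natDegree_X_sub_C, mul_one]
      refine lt_of_le_of_lt (natDegree_add_le _ _) ?_
      rw [natDegree_one]
      refine max_lt (lt_of_le_of_lt (Polynomial.natDegree_sum_le_of_forall_le _ _
        (fun c _ => h1 c)) ?_) hp.pos
      have := hp.two_le; omega
  exact eq_neg_of_add_eq_zero_left key



private lemma aux_exists_cast (p : ℕ) [Fact p.Prime] (Z : Type*) [Field Z] [CharP Z p]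
    {z : Z} (hz : z ^ p = z) : ∃ c : ZMod p, ZMod.castHom (dvd_refl p) Z c = z := by
  have hp : p.Prime := Fact.out
  haveI : NeZero p := ⟨hp.ne_zero⟩
  set ι : ZMod p →+* Z := ZMod.castHom (dvd_refl p) Z with hι
  have hinj : Function.Injective ι := ZMod.castHom_injective Z
  by_contra hcon
  push_neg at hcon
  classical
  set f : Z[X] := X ^ p - X with hf
  have hdeg : f.degree = p := by
    rw [hf, degree_sub_eq_left_of_degree_lt, degree_X_pow]
    rw [degree_X_pow, degree_X]
    exact_mod_cast hp.one_lt
  have hne : f ≠ 0 := fun h => by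
    rw [h, degree_zero] at hdeg
    exact (by simp : (⊥ : WithBot ℕ) ≠ (p : WithBot ℕ)) hdeg
  have hnat : f.natDegree = p := natDegree_eq_of_degree_eq_some hdeg
  set s : Finset Z := insert z (Finset.univ.image ι) with hs
  have hsub : s.val ⊆ f.roots := by
    intro y hy
    rw [Polynomial.mem_roots hne]
    have hy' : y = z ∨ ∃ c : ZMod p, ι c = y := by
      simpa [hs] using hy
    rcases hy' with rfl | ⟨c, rfl⟩
    · simp [hf, IsRoot.def, hz]
    · simp only [hf, IsRoot.def, eval_sub, eval_pow, eval_X]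
      rw [← map_pow, ZMod.pow_card, sub_self]
  have hcard := Polynomial.card_le_degree_of_subset_roots hsub
  have hzmem : z ∉ Finset.univ.image ι := by
    simp only [Finset.mem_image, Finset.mem_univ, true_and]
    rintro ⟨c, hc⟩
    exact hcon c hc
  rw [hnat, hs, Finset.card_insert_of_notMem hzmem,
    Finset.card_image_of_injective _ hinj, Finset.card_univ, ZMod.card] at hcard
  omega


set_option maxHeartbeats 2000000 in
/-- Let `D` be a `p`-division algebra with centre `Z` and `T ⊆ D` a torus of rank `d`
containing `1`. Then the set `Λ` of weights of `T` in `D` is an additive subgroup of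
`Hom_Z(T, Z)`, every weight takes values in the prime field `𝔽_p` (on toral elements),
and `Λ ≃ (ℤ/pℤ)^d`; in particular `|Λ| = p^d`. -/
theorem weight_group_of_torus
    (p : ℕ) (hp : p.Prime)
    (Z : Type*) [Field Z] (D : Type*) [DivisionRing D] [Algebra Z D] [CharP D p]
    (hcent : Set.range (algebraMap Z D) = Set.center D)
    [FiniteDimensional Z D] (hpdim : ∃ k : ℕ, Module.finrank Z D = p ^ k)
    (T : Submodule Z D) (h1T : (1 : D) ∈ T)
    (hTcomm : ∀ x ∈ T, ∀ y ∈ T, x * y = y * x)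
    (hToral : T = Submodule.span Z {t : D | t ∈ T ∧ t ^ p - t ∈ Set.range (algebraMap Z D)})
    (d : ℕ) (hrank : Module.finrank Z T = d + 1) :
    ∃ Λ : AddSubgroup (T →ₗ[Z] Z),
      (Λ : Set (T →ₗ[Z] Z)) =
        {lam | ∃ x : D, x ≠ 0 ∧
          ∀ t : T, (t : D) * x - x * (t : D) = algebraMap Z D (lam t) * x} ∧
      (∀ lam ∈ Λ, ∀ t : T,
        (t : D) ^ p - (t : D) ∈ Set.range (algebraMap Z D) → (lam t) ^ p = lam t) ∧
      Nonempty (Λ ≃+ (Fin d → ZMod p)) ∧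
      Nat.card Λ = p ^ d := by
  classical
  haveI : Fact p.Prime := ⟨hp⟩
  haveI : NeZero p := ⟨hp.ne_zero⟩
  have halg_inj : Function.Injective (algebraMap Z D) := (algebraMap Z D).injective
  haveI : CharP Z p := (algebraMap Z D).charP halg_inj p
  set ι : ZMod p →+* Z := ZMod.castHom (dvd_refl p) Z with hιdef
  have hιinj : Function.Injective ι := ZMod.castHom_injective Z
  set WS : Set (T →ₗ[Z] Z) :=
    {lam | ∃ x : D, x ≠ 0 ∧
      ∀ t : T, (t : D) * x - x * (t : D) = algebraMap Z D (lam t) * x} with hWS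
  -- closure properties
  have hzero : (0 : T →ₗ[Z] Z) ∈ WS := by
    refine ⟨1, one_ne_zero, fun t => ?_⟩
    simp
  have hadd : ∀ lam mu, lam ∈ WS → mu ∈ WS → lam + mu ∈ WS := by
    rintro lam mu ⟨x, hx0, hx⟩ ⟨y, hy0, hy⟩
    refine ⟨x * y, mul_ne_zero hx0 hy0, fun t => ?_⟩
    set a := algebraMap Z D (lam t) with ha
    set b := algebraMap Z D (mu t) with hb
    have h1 : (t : D) * x = a * x + x * (t : D) := eq_add_of_sub_eq (hx t)
    have h2 : (t : D) * y = b * y + y * (t : D) := eq_add_of_sub_eq (hy t)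
    have hbx : x * b = b * x := (Algebra.commutes _ _).symm
    have e1 : (t : D) * (x * y) = a * (x * y) + b * (x * y) + (x * y) * (t : D) := by
      calc (t : D) * (x * y) = ((t : D) * x) * y := (mul_assoc _ _ _).symm
        _ = (a * x + x * (t : D)) * y := by rw [h1]
        _ = a * (x * y) + x * ((t : D) * y) := by rw [add_mul, mul_assoc, mul_assoc]
        _ = a * (x * y) + x * (b * y + y * (t : D)) := by rw [h2]
        _ = a * (x * y) + (x * (b * y) + x * (y * (t : D))) := by rw [mul_add]
        _ = a * (x * y) + (b * (x * y) + (x * y) * (t : D)) := by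
              rw [← mul_assoc x b y, hbx, mul_assoc b x y, ← mul_assoc x y]
        _ = a * (x * y) + b * (x * y) + (x * y) * (t : D) := (add_assoc _ _ _).symm
    rw [e1, LinearMap.add_apply, map_add, add_mul, ← ha, ← hb, add_sub_cancel_right]
  have hneg : ∀ lam, lam ∈ WS → -lam ∈ WS := by
    rintro lam ⟨x, hx0, hx⟩
    refine ⟨x⁻¹, inv_ne_zero hx0, fun t => ?_⟩
    set a := algebraMap Z D (lam t) with ha
    have h1 : (t : D) * x = a * x + x * (t : D) := eq_add_of_sub_eq (hx t)
    have hxinv : x⁻¹ * x = 1 := inv_mul_cancel₀ hx0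
    apply mul_right_cancel₀ hx0
    have lhs : ((t : D) * x⁻¹ - x⁻¹ * (t : D)) * x = -(a * (x⁻¹ * x)) := by
      rw [sub_mul]
      have e2 : (x⁻¹ * (t : D)) * x = x⁻¹ * ((t : D) * x) := by rw [mul_assoc]
      rw [e2, h1, mul_add, ← mul_assoc x⁻¹ a x, ← Algebra.commutes (lam t) x⁻¹, ← ha,
        mul_assoc a x⁻¹ x, ← mul_assoc x⁻¹ x (t : D), hxinv, one_mul, mul_assoc]
      rw [hxinv, mul_one]
      abel
    rw [lhs, hxinv, mul_one, LinearMap.neg_apply, map_neg, ← ha,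
      mul_assoc, hxinv, mul_one]
  have hFermat : ∀ lam ∈ WS, ∀ t : T,
      (t : D) ^ p - (t : D) ∈ Set.range (algebraMap Z D) → (lam t) ^ p = lam t := by
    rintro lam ⟨x, hx0, hx⟩ t ⟨z0, hz0⟩
    set a := algebraMap Z D (lam t) with ha
    have hta : Commute ((t : D)) a := (Algebra.commutes _ _).symm
    have h1 : (t : D) * x = x * ((t : D) + a) := by
      rw [mul_add, ← Algebra.commutes (lam t) x, ← ha]
      have := eq_add_of_sub_eq (hx t)
      rw [this]; abel
    have hn : ∀ n : ℕ, (t : D) ^ n * x = x * ((t : D) + a) ^ n := by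
      intro n
      induction n with
      | zero => simp
      | succ n ih =>
        rw [pow_succ', mul_assoc, ih, pow_succ', ← mul_assoc, h1, mul_assoc]
    have hfrob : ((t : D) + a) ^ p = (t : D) ^ p + a ^ p := add_pow_char_of_commute p hta
    have htp : (t : D) ^ p = (t : D) + algebraMap Z D z0 := by
      rw [hz0]; abel
    have hway1 : (t : D) ^ p * x - x * (t : D) ^ p = a * x := by
      rw [htp, add_mul, mul_add, ← Algebra.commutes z0 x]
      have := hx t
      rw [← ha] at this
      rw [← this]; abel
    have hway2 : (t : D) ^ p * x - x * (t : D) ^ p = a ^ p * x := by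
      rw [hn p, hfrob, mul_add]
      have hc : x * a ^ p = a ^ p * x := by
        rw [ha, ← map_pow]; exact (Algebra.commutes _ _).symm
      rw [hc]; abel
    have : (a ^ p - a) * x = 0 := by rw [sub_mul, ← hway1, ← hway2, sub_self]
    rcases mul_eq_zero.mp this with h | h
    · have : algebraMap Z D ((lam t) ^ p - lam t) = algebraMap Z D 0 := by
        rw [map_zero, map_sub, map_pow, ← ha, h]
      have := halg_inj this
      exact sub_eq_zero.mp this
    · exact absurd h hx0
  -- basis of toral elements containing 1
  have h1ne : (⟨1, h1T⟩ : T) ≠ 0 := by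
    intro h
    exact one_ne_zero (α := D) (congrArg Subtype.val h)
  set S0 : Set T := {t : T | (t : D) ^ p - (t : D) ∈ Set.range (algebraMap Z D)} with hS0
  have h1S : (⟨1, h1T⟩ : T) ∈ S0 := by
    simp only [hS0, Set.mem_setOf_eq, one_pow, sub_self]
    exact ⟨0, map_zero _⟩
  have hspan : ⊤ ≤ Submodule.span Z S0 := by
    have himg : Subtype.val '' S0 = {t : D | t ∈ T ∧ t ^ p - t ∈ Set.range (algebraMap Z D)} := by
      ext y
      constructor
      · rintro ⟨⟨y, hyT⟩, hyS, rfl⟩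
        exact ⟨hyT, hyS⟩
      · rintro ⟨hyT, hyt⟩
        exact ⟨⟨y, hyT⟩, hyt, rfl⟩
    have hmap : Submodule.map T.subtype (Submodule.span Z S0) = Submodule.map T.subtype ⊤ := by
      rw [Submodule.map_span, Submodule.map_top, Submodule.range_subtype]
      rw [show ⇑T.subtype '' S0 = Subtype.val '' S0 from rfl, himg, ← hToral]
    exact le_of_eq (Submodule.map_injective_of_injective (Submodule.injective_subtype T) hmap).symm
  have hsing : LinearIndepOn Z id ({⟨1, h1T⟩} : Set T) :=
    (linearIndepOn_singleton_iff Z).mpr h1ne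
  have hsub1 : ({⟨1, h1T⟩} : Set T) ⊆ S0 := Set.singleton_subset_iff.mpr h1S
  set B0 : Module.Basis (hsing.extend hsub1) Z T := Module.Basis.extendLe hsing hsub1 hspan with hB0def
  have hbsubS : (hsing.extend hsub1 : Set T) ⊆ S0 := hsing.extend_subset hsub1
  have h1mem : (⟨1, h1T⟩ : T) ∈ hsing.extend hsub1 := hsing.subset_extend hsub1 rfl
  have hfinb : (hsing.extend hsub1).Finite := by
    have hli := B0.linearIndependent
    rw [hB0def, Module.Basis.coe_extendLe] at hli
    exact hli.setFinite
  haveI : Fintype (hsing.extend hsub1) := hfinb.fintype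
  have hcardb : Fintype.card (hsing.extend hsub1) = d + 1 := by
    rw [← Module.finrank_eq_card_basis B0, hrank]
  set e0 : hsing.extend hsub1 ≃ Fin (d + 1) := Fintype.equivFinOfCardEq hcardb with he0
  set e : hsing.extend hsub1 ≃ Fin (d + 1) :=
    e0.trans (Equiv.swap (e0 ⟨⟨1, h1T⟩, h1mem⟩) 0) with he
  set B : Module.Basis (Fin (d + 1)) Z T := B0.reindex e with hBdef
  have hBval : ∀ j, B j = ((e.symm j : hsing.extend hsub1) : T) := by
    intro j
    rw [hBdef, Module.Basis.reindex_apply, hB0def, Module.Basis.extendLe_apply_self]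
  have hB0val : B 0 = ⟨1, h1T⟩ := by
    rw [hBval]
    have : e.symm 0 = ⟨⟨1, h1T⟩, h1mem⟩ := by
      rw [he]
      simp only [Equiv.symm_trans_apply, Equiv.symm_swap, Equiv.swap_apply_right]
      exact e0.symm_apply_apply _
    rw [this]
  have hBS : ∀ j, B j ∈ S0 := fun j => by rw [hBval]; exact hbsubS (e.symm j).2
  set tor : Fin d → T := fun i => B i.succ with htor
  have htorS : ∀ i, ((tor i : T) : D) ^ p - ((tor i : T) : D) ∈ Set.range (algebraMap Z D) :=
    fun i => hBS i.succ
  -- the adjoint endomorphisms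
  set f : Fin d → Module.End Z D := fun i =>
    LinearMap.mulLeft Z ((tor i : T) : D) - LinearMap.mulRight Z ((tor i : T) : D) with hfdef
  have hf_apply : ∀ (i : Fin d) (x : D),
      f i x = ((tor i : T) : D) * x - x * ((tor i : T) : D) := by
    intro i x
    rw [hfdef]
    simp [LinearMap.sub_apply, LinearMap.mulLeft_apply, LinearMap.mulRight_apply]
  haveI : Nontrivial (Module.End Z D) :=
    ⟨1, 0, fun h => one_ne_zero (α := D) (by simpa using LinearMap.congr_fun h 1)⟩
  haveI : CharP (Module.End Z D) p := charP_of_injective_algebraMap' Z (A := Module.End Z D) p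
  have had_pow : ∀ s : D, s ^ p - s ∈ Set.range (algebraMap Z D) →
      (LinearMap.mulLeft Z s - LinearMap.mulRight Z s) ^ p
        = LinearMap.mulLeft Z s - LinearMap.mulRight Z s := by
    rintro s ⟨z0, hz0⟩
    rw [sub_pow_char_of_commute p (LinearMap.commute_mulLeft_right s s),
      LinearMap.pow_mulLeft, LinearMap.pow_mulRight]
    have hsp : s ^ p = s + algebraMap Z D z0 := by rw [hz0]; abel
    have hL : LinearMap.mulLeft Z (s + algebraMap Z D z0)
        = LinearMap.mulLeft Z s + LinearMap.mulLeft Z (algebraMap Z D z0) := by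
      ext x; simp [add_mul]
    have hR : LinearMap.mulRight Z (s + algebraMap Z D z0)
        = LinearMap.mulRight Z s + LinearMap.mulRight Z (algebraMap Z D z0) := by
      ext x; simp [mul_add]
    have hC : LinearMap.mulLeft Z (algebraMap Z D z0)
        = LinearMap.mulRight Z (algebraMap Z D z0) := by
      ext x; exact Algebra.commutes z0 x
    rw [hsp, hL, hR, hC]
    abel
  have hfp : ∀ i, (f i) ^ p = f i := fun i => had_pow _ (htorS i)
  have hcomm_f : ∀ i j, Commute (f i) (f j) := by
    intro i j
    have hij : ((tor i : T) : D) * ((tor j : T) : D) = ((tor j : T) : D) * ((tor i : T) : D) :=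
      hTcomm _ (tor i).2 _ (tor j).2
    rw [hfdef]
    have hLL : Commute (LinearMap.mulLeft Z ((tor i : T) : D))
        (LinearMap.mulLeft Z ((tor j : T) : D)) := by
      apply LinearMap.ext; intro x
      simp only [Module.End.mul_apply, LinearMap.mulLeft_apply]
      rw [← mul_assoc, hij, mul_assoc]
    have hRR : Commute (LinearMap.mulRight Z ((tor i : T) : D))
        (LinearMap.mulRight Z ((tor j : T) : D)) := by
      apply LinearMap.ext; intro x
      simp only [Module.End.mul_apply, LinearMap.mulRight_apply]
      rw [mul_assoc, ← hij, mul_assoc]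
    exact ((hLL.sub_right (LinearMap.commute_mulLeft_right _ _)).sub_left
      (((LinearMap.commute_mulLeft_right _ _).symm).sub_right hRR))
  -- operator identities
  have hop : ∀ i : Fin d,
      ∑ c : ZMod p, (f i - ι c • (1 : Module.End Z D)) ^ (p - 1) = -1 := by
    intro i
    have hid := aux_sum_identity p Z
    have h2 := congrArg (Polynomial.aeval (f i)) hid
    simpa [map_sum, map_pow, map_sub, Polynomial.aeval_X, Polynomial.aeval_C,
      Module.algebraMap_end_eq_smul_id, ← hιdef, Module.End.one_eq_id] using h2
  have hgp : ∀ (i : Fin d) (c : ZMod p),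
      (f i - ι c • (1 : Module.End Z D)) ^ p = f i - ι c • 1 := by
    intro i c
    have hc : Commute (f i) (ι c • (1 : Module.End Z D)) :=
      (Commute.one_right (f i)).smul_right (ι c)
    rw [sub_pow_char_of_commute p hc, hfp i, _root_.smul_pow, one_pow, ← map_pow, ZMod.pow_card]
  -- simultaneous eigenspace decomposition
  set W : (Fin d → ZMod p) → Submodule Z D := fun v =>
    ⨅ i : Fin d, LinearMap.ker (f i - ι (v i) • (1 : Module.End Z D)) with hWdef
  have hWmem : ∀ v x, x ∈ W v ↔ ∀ i, f i x = ι (v i) • x := by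
    intro v x
    rw [hWdef]
    simp only [Submodule.mem_iInf, LinearMap.mem_ker, LinearMap.sub_apply,
      LinearMap.smul_apply, Module.End.one_apply, sub_eq_zero]
  have hdecomp : (⊤ : Submodule Z D) ≤ ⨆ v, W v := by
    set E : ℕ → (Fin d → ZMod p) → Submodule Z D := fun n v =>
      ⨅ (i : Fin d) (_ : (i : ℕ) < n), LinearMap.ker (f i - ι (v i) • (1 : Module.End Z D))
      with hEdef
    have hEW : ∀ v, E d v = W v := by
      intro v
      rw [hEdef, hWdef]
      exact iInf_congr fun i => iInf_pos i.isLt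
    have key : ∀ n, n ≤ d → (⊤ : Submodule Z D) ≤ ⨆ v, E n v := by
      intro n
      induction n with
      | zero =>
        intro _
        refine le_trans ?_ (le_iSup _ 0)
        rw [hEdef]
        simp
      | succ n ih =>
        intro hnd
        have hlt : n < d := hnd
        refine le_trans (ih (Nat.le_of_succ_le hnd)) (iSup_le fun v => ?_)
        intro x hx
        simp only [hEdef, Submodule.mem_iInf, LinearMap.mem_ker] at hx
        set k : Fin d := ⟨n, hlt⟩ with hk
        have hpred : p - 1 + 1 = p := Nat.succ_pred_eq_of_pos hp.pos
        have hsum : ∑ c : ZMod p,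
            (x - ((f k - ι c • (1 : Module.End Z D)) ^ (p - 1)) x) = x := by
          rw [Finset.sum_sub_distrib]
          have h2 : ∑ c : ZMod p, ((f k - ι c • (1 : Module.End Z D)) ^ (p - 1)) x = -x := by
            have h3 := congrArg (fun g : Module.End Z D => g x) (hop k)
            simpa using h3
          have h4 : ((p : ℕ) • x : D) = 0 := by
            rw [nsmul_eq_mul, CharP.cast_eq_zero D p, zero_mul]
          rw [h2, Finset.sum_const, Finset.card_univ, ZMod.card, h4, zero_sub, neg_neg]
        rw [← hsum]
        refine Submodule.sum_mem _ fun c _ => ?_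
        refine Submodule.mem_iSup_of_mem (Function.update v k c) ?_
        have hmem : ∀ (i : Fin d), (i : ℕ) < n + 1 →
            (f i - ι (Function.update v k c i) • (1 : Module.End Z D))
              (x - ((f k - ι c • (1 : Module.End Z D)) ^ (p - 1)) x) = 0 := by
          intro i hi
          by_cases hik : i = k
          · subst hik
            rw [Function.update_self, map_sub]
            have h5 : (f k - ι c • (1 : Module.End Z D))
                (((f k - ι c • (1 : Module.End Z D)) ^ (p - 1)) x)
                = ((f k - ι c • (1 : Module.End Z D)) ^ p) x := by
              rw [← Module.End.mul_apply, ← pow_succ', hpred]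
            rw [h5, hgp k c]
            exact sub_self _
          · have hival : (i : ℕ) < n := by
              have hne : (i : ℕ) ≠ n := fun h => hik (Fin.ext h)
              omega
            rw [Function.update_of_ne hik]
            have hx_i : (f i - ι (v i) • (1 : Module.End Z D)) x = 0 := hx i hival
            have hcm : Commute (f i - ι (v i) • (1 : Module.End Z D))
                ((f k - ι c • (1 : Module.End Z D)) ^ (p - 1)) := by
              apply Commute.pow_right
              have h1 : Commute (f i) (f k) := hcomm_f i k
              have h2 : Commute (f i) (ι c • (1 : Module.End Z D)) :=
                (Commute.one_right _).smul_right _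
              have h3 : Commute (ι (v i) • (1 : Module.End Z D)) (f k) :=
                (Commute.one_left _).smul_left _
              have h4 : Commute (ι (v i) • (1 : Module.End Z D)) (ι c • (1 : Module.End Z D)) :=
                ((Commute.refl (1 : Module.End Z D)).smul_left _).smul_right _
              exact (h1.sub_right h2).sub_left (h3.sub_right h4)
            rw [map_sub]
            have h6 : (f i - ι (v i) • (1 : Module.End Z D))
                (((f k - ι c • (1 : Module.End Z D)) ^ (p - 1)) x)
                = ((f k - ι c • (1 : Module.End Z D)) ^ (p - 1))
                  ((f i - ι (v i) • (1 : Module.End Z D)) x) := by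
              rw [← Module.End.mul_apply, ← Module.End.mul_apply, hcm.eq]
            rw [h6, hx_i, map_zero, sub_self]
        simp only [hEdef, Submodule.mem_iInf, LinearMap.mem_ker]
        exact hmem
    refine le_trans (key d le_rfl) (iSup_le fun v => ?_)
    rw [hEW v]
    exact le_iSup _ v
  -- linear forms from tuples
  set gv : (Fin d → ZMod p) → (T →ₗ[Z] Z) := fun v =>
    B.constr Z (Fin.cons 0 fun i => ι (v i)) with hgvdef
  have hgv1 : ∀ v, gv v ⟨1, h1T⟩ = 0 := by
    intro v
    rw [← hB0val, hgvdef, B.constr_basis]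
    exact Fin.cons_zero _ _
  have hgvt : ∀ v i, gv v (tor i) = ι (v i) := by
    intro v i
    rw [show tor i = B i.succ from rfl, hgvdef, B.constr_basis]
    exact Fin.cons_succ _ _ _
  have hgv0 : gv 0 = 0 := by
    apply B.ext
    intro j
    refine Fin.cases ?_ ?_ j
    · rw [hB0val, hgv1, LinearMap.zero_apply]
    · intro i
      rw [show B i.succ = tor i from rfl, hgvt, LinearMap.zero_apply, Pi.zero_apply, map_zero]
  have hgvadd : ∀ v w, gv (v + w) = gv v + gv w := by
    intro v w
    apply B.ext
    intro j
    refine Fin.cases ?_ ?_ j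
    · rw [hB0val, hgv1, LinearMap.add_apply, hgv1, hgv1, add_zero]
    · intro i
      rw [show B i.succ = tor i from rfl, hgvt, LinearMap.add_apply, hgvt, hgvt,
        Pi.add_apply, map_add]
  have hgvinj : Function.Injective gv := by
    intro v w h
    funext i
    apply hιinj
    rw [← hgvt v i, ← hgvt w i, h]
  -- nonzero simultaneous eigenspaces give weights
  have hmemWS_of_W : ∀ v : Fin d → ZMod p, W v ≠ ⊥ → gv v ∈ WS := by
    intro v hne
    obtain ⟨x, hxW, hx0⟩ := Submodule.exists_mem_ne_zero_of_ne_bot hne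
    refine ⟨x, hx0, ?_⟩
    have hker : ∀ i, f i x = ι (v i) • x := (hWmem v x).mp hxW
    set G : T →ₗ[Z] D :=
      ((LinearMap.mulRight Z x).comp T.subtype - (LinearMap.mulLeft Z x).comp T.subtype)
        - (LinearMap.toSpanSingleton Z D x).comp (gv v) with hGdef
    have hGapp : ∀ t : T, G t = (t : D) * x - x * (t : D) - (gv v t) • x := by
      intro t
      rw [hGdef]
      simp [LinearMap.sub_apply, LinearMap.comp_apply, LinearMap.mulRight_apply,
        LinearMap.mulLeft_apply, LinearMap.toSpanSingleton_apply]
    have hG0 : G = 0 := by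
      apply B.ext
      intro j
      refine Fin.cases ?_ ?_ j
      · rw [hGapp, hB0val, LinearMap.zero_apply]
        have hc : ((⟨1, h1T⟩ : T) : D) = 1 := rfl
        rw [hc, one_mul, mul_one, sub_self, hgv1, zero_smul, sub_zero]
      · intro i
        rw [hGapp, LinearMap.zero_apply, show B i.succ = tor i from rfl]
        have h7 := hker i
        rw [hf_apply] at h7
        rw [h7, hgvt, sub_self]
    intro t
    have h8 := LinearMap.congr_fun hG0 t
    rw [hGapp, LinearMap.zero_apply] at h8
    rw [sub_eq_zero.mp h8, Algebra.smul_def]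
  -- every weight comes from a tuple
  have hWS_sub : ∀ lam ∈ WS, ∃ v, gv v = lam := by
    intro lam hlam
    obtain ⟨x, hx0, hx⟩ := hlam
    have hvals : ∀ i : Fin d, ∃ c : ZMod p, ι c = lam (tor i) := fun i =>
      aux_exists_cast p Z (hFermat lam ⟨x, hx0, hx⟩ (tor i) (htorS i))
    choose v hv using hvals
    refine ⟨v, ?_⟩
    apply B.ext
    intro j
    refine Fin.cases ?_ ?_ j
    · rw [hB0val, hgv1]
      have h10 := hx ⟨1, h1T⟩
      have hc : ((⟨1, h1T⟩ : T) : D) = 1 := rfl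
      rw [hc, one_mul, mul_one, sub_self] at h10
      rcases mul_eq_zero.mp h10.symm with h | h
      · have h12 := halg_inj (h.trans (map_zero (algebraMap Z D)).symm)
        rw [h12]
      · exact absurd h hx0
    · intro i
      rw [show B i.succ = tor i from rfl, hgvt]
      exact hv i
  -- every tuple is a weight
  have hWS_mem : ∀ v, gv v ∈ WS := by
    by_contra hcon
    push_neg at hcon
    obtain ⟨v₀, hv₀⟩ := hcon
    set H : Submodule (ZMod p) (Fin d → ZMod p) :=
      { carrier := {v | gv v ∈ WS}
        add_mem' := by
          intro a b ha hb
          simp only [Set.mem_setOf_eq] at *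
          rw [hgvadd]
          exact hadd _ _ ha hb
        zero_mem' := by
          simp only [Set.mem_setOf_eq]
          rw [hgv0]
          exact hzero
        smul_mem' := by
          intro c v hv
          simp only [Set.mem_setOf_eq] at *
          have hns : ∀ (n : ℕ) (w : Fin d → ZMod p), gv w ∈ WS → gv (n • w) ∈ WS := by
            intro n
            induction n with
            | zero =>
              intro w _
              rw [zero_smul, hgv0]
              exact hzero
            | succ n ih =>
              intro w hw
              rw [succ_nsmul, hgvadd]
              exact hadd _ _ (ih w hw) hw
          have h1 : c • v = (c.val : ℕ) • v := by
            rw [← Nat.cast_smul_eq_nsmul (ZMod p), ZMod.natCast_val, ZMod.cast_id]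
          rw [h1]
          exact hns _ v hv } with hHdef
    have hv₀H : v₀ ∉ H := hv₀
    obtain ⟨φ, hφv₀, hφH⟩ := Submodule.exists_dual_map_eq_bot_of_notMem hv₀H inferInstance
    set tt : T := ∑ i : Fin d, ι (φ (Pi.single i 1)) • tor i with httdef
    have httD : (tt : D) = ∑ i : Fin d, ι (φ (Pi.single i 1)) • ((tor i : T) : D) := by
      rw [httdef]
      simp
    have had : ∀ x : D, (tt : D) * x - x * (tt : D)
        = ∑ i, ι (φ (Pi.single i 1)) • (f i x) := by
      intro x
      rw [httD, Finset.sum_mul, Finset.mul_sum, ← Finset.sum_sub_distrib]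
      refine Finset.sum_congr rfl fun i _ => ?_
      rw [hf_apply, smul_sub, smul_mul_assoc, mul_smul_comm]
    have hφsingle : ∀ w : Fin d → ZMod p, φ w = ∑ i, w i * φ (Pi.single i 1) := by
      intro w
      conv_lhs => rw [← Finset.univ_sum_single w]
      rw [map_sum]
      refine Finset.sum_congr rfl fun i _ => ?_
      have hsw : (Pi.single i (w i) : Fin d → ZMod p)
          = w i • (Pi.single i 1 : Fin d → ZMod p) := by
        rw [← Pi.single_smul, smul_eq_mul, mul_one]
      rw [hsw, map_smul, smul_eq_mul]
    have hker_tt : ∀ v x, x ∈ W v → (tt : D) * x - x * (tt : D) = 0 := by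
      intro v x hxW
      by_cases hWv : W v = ⊥
      · rw [hWv, Submodule.mem_bot] at hxW
        rw [hxW, mul_zero, zero_mul, sub_self]
      · have hvH : v ∈ H := hmemWS_of_W v hWv
        have hφv : φ v = 0 := by
          have hmem2 : φ v ∈ Submodule.map φ H := ⟨v, hvH, rfl⟩
          rw [hφH, Submodule.mem_bot] at hmem2
          exact hmem2
        rw [had]
        have hker := (hWmem v x).mp hxW
        have hcongr : ∀ i ∈ Finset.univ, ι (φ (Pi.single i 1)) • (f i x)
            = (ι (v i * φ (Pi.single i 1))) • x := by
          intro i _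
          rw [hker i, smul_smul, ← map_mul, mul_comm]
        rw [Finset.sum_congr rfl hcongr, ← Finset.sum_smul, ← map_sum, ← hφsingle,
          hφv, map_zero, zero_smul]
    have hcentral : (tt : D) ∈ Set.center D := by
      rw [Semigroup.mem_center_iff]
      intro gx
      have hx2 : gx ∈ ⨆ v, W v := hdecomp trivial
      set K : Submodule Z D := LinearMap.ker
        (LinearMap.mulLeft Z (tt : D) - LinearMap.mulRight Z (tt : D)) with hKdef
      have hle : (⨆ v, W v) ≤ K := by
        refine iSup_le fun v y hy => ?_
        rw [hKdef, LinearMap.mem_ker, LinearMap.sub_apply, LinearMap.mulLeft_apply,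
          LinearMap.mulRight_apply]
        exact hker_tt v y hy
      have h13 := hle hx2
      rw [hKdef, LinearMap.mem_ker, LinearMap.sub_apply, LinearMap.mulLeft_apply,
        LinearMap.mulRight_apply, sub_eq_zero] at h13
      exact h13.symm
    rw [← hcent] at hcentral
    obtain ⟨z, hz⟩ := hcentral
    have htt1 : tt = z • (⟨1, h1T⟩ : T) := by
      apply Subtype.ext
      show (tt : D) = z • (1 : D)
      rw [← hz, Algebra.algebraMap_eq_smul_one]
    have hli := B.linearIndependent
    rw [Fintype.linearIndependent_iff] at hli
    set coeffs : Fin (d + 1) → Z := Fin.cons z (fun i => -ι (φ (Pi.single i 1))) with hcoeffs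
    have hsum0 : ∑ j, coeffs j • B j = 0 := by
      rw [Fin.sum_univ_succ]
      simp only [hcoeffs, Fin.cons_zero, Fin.cons_succ]
      rw [hB0val]
      have hneg2 : ∑ i : Fin d, (-ι (φ (Pi.single i 1))) • B i.succ
          = -∑ i : Fin d, ι (φ (Pi.single i 1)) • tor i := by
        rw [← Finset.sum_neg_distrib]
        refine Finset.sum_congr rfl fun i _ => ?_
        exact neg_smul (ι (φ (Pi.single i 1))) (tor i)
      rw [hneg2, ← httdef, ← htt1]
      exact add_neg_cancel tt
    have hexist : ∃ i, φ (Pi.single i 1) ≠ 0 := by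
      by_contra hall
      push_neg at hall
      apply hφv₀
      rw [hφsingle v₀]
      simp [hall]
    obtain ⟨i₀, hi₀⟩ := hexist
    have h11 := hli coeffs hsum0 i₀.succ
    rw [hcoeffs] at h11
    simp only [Fin.cons_succ] at h11
    exact hi₀ (hιinj (by rw [map_zero]; exact neg_eq_zero.mp h11))
  -- assemble
  set Lam : AddSubgroup (T →ₗ[Z] Z) :=
    { carrier := WS, add_mem' := fun ha hb => hadd _ _ ha hb,
      zero_mem' := hzero, neg_mem' := fun ha => hneg _ ha } with hLam
  have F : (Fin d → ZMod p) ≃+ Lam :=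
    { toFun := fun v => ⟨gv v, hWS_mem v⟩
      invFun := fun lam => Classical.choose (hWS_sub lam.1 lam.2)
      left_inv := fun v => hgvinj (Classical.choose_spec (hWS_sub (gv v) (hWS_mem v)))
      right_inv := fun lam => Subtype.ext (Classical.choose_spec (hWS_sub lam.1 lam.2))
      map_add' := fun v w => Subtype.ext (hgvadd v w) }
  refine ⟨Lam, rfl, fun lam hl => hFermat lam hl, ⟨F.symm⟩, ?_⟩
  have hc := Nat.card_congr F.toEquiv
  rw [← hc, Nat.card_eq_fintype_card, Fintype.card_fun, ZMod.card, Fintype.card_fin]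
end

section
/- Let D be a division ring finite-dimensional over its infinite centre Z, and let V ⊆ D(X) be a Z(X)-subspace with dim_{Z(X)} V = n. Then there exists a nonzero polynomial f ∈ Z[X] such that for every λ ∈ Z^q with f(λ) ≠ 0, the specialization V̄_λ = π_λ(V ∩ D[X]) is a Z-subspace of D of dimension n. -/
open scoped TensorProduct

attribute [local instance] Algebra.TensorProduct.rightAlgebra

/-- The natural inclusion `D[X] = D ⊗[Z] Z[X] → D(X) = D ⊗[Z] Z(X)`. -/
noncomputable def polyIncl (Z : Type*) [Field Z] (D : Type*) [DivisionRing D] [Algebra Z D]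
    (q : ℕ) (ZX : Type*) [Field ZX] [Algebra (MvPolynomial (Fin q) Z) ZX]
    [Algebra Z ZX] [IsScalarTower Z (MvPolynomial (Fin q) Z) ZX] :
    (D ⊗[Z] MvPolynomial (Fin q) Z) →ₐ[Z] D ⊗[Z] ZX :=
  Algebra.TensorProduct.map (AlgHom.id Z D) (IsScalarTower.toAlgHom Z (MvPolynomial (Fin q) Z) ZX)

/-- The specialization map `π_λ = id ⊗ (evaluation at λ) : D[X] → D`. -/
noncomputable def specHom (Z : Type*) [Field Z] (D : Type*) [DivisionRing D] [Algebra Z D]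
    (q : ℕ) (lam : Fin q → Z) :
    (D ⊗[Z] MvPolynomial (Fin q) Z) →ₐ[Z] D :=
  Algebra.TensorProduct.lift (AlgHom.id Z D) ((Algebra.ofId Z D).comp (MvPolynomial.aeval lam))
    (fun a b => (Algebra.commutes (MvPolynomial.aeval lam b) a).symm)

/-- The specialization `V̄_λ = π_λ(V ∩ D[X])` of a `Z(X)`-subspace `V ⊆ D(X)`, as a
`Z`-subspace of `D`. -/
noncomputable def specSubmodule (Z : Type*) [Field Z] (D : Type*) [DivisionRing D] [Algebra Z D]
    (q : ℕ) (ZX : Type*) [Field ZX] [Algebra (MvPolynomial (Fin q) Z) ZX]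
    [Algebra Z ZX] [IsScalarTower Z (MvPolynomial (Fin q) Z) ZX]
    (V : Submodule ZX (D ⊗[Z] ZX)) (lam : Fin q → Z) : Submodule Z D :=
  Submodule.map (specHom Z D q lam).toLinearMap
    (Submodule.comap (polyIncl Z D q ZX).toLinearMap (V.restrictScalars Z))

set_option synthInstance.maxHeartbeats 1000000
set_option maxHeartbeats 2000000

open Module Matrix

/- ### Auxiliary machinery -/

lemma exists_submatrix_det_ne_zero' {K : Type*} [Field K] {n m : ℕ}
    (M : Matrix (Fin n) (Fin m) K) (h : LinearIndependent K M) :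
    ∃ g : Fin n → Fin m, (M.submatrix id g).det ≠ 0 := by
  classical
  have hrank : M.rank = n := by simpa using h.rank_matrix
  have hspan : Submodule.span K (Set.range Mᵀ) = ⊤ := by
    apply Submodule.eq_top_of_finrank_eq
    rw [show Set.range Mᵀ = Set.range (Matrix.col M) from rfl, ← Matrix.rank_eq_finrank_span_cols, hrank]
    simp
  obtain ⟨s, hs_sub, hs_span, hs_li⟩ := exists_linearIndependent K (Set.range Mᵀ)
  rw [hspan] at hs_span
  have hfin : s.Finite := (Set.finite_range Mᵀ).subset hs_sub
  haveI := hfin.fintype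
  have hcard : s.toFinset.card = n := by
    have h1 := finrank_span_set_eq_card hs_li
    rw [hs_span] at h1
    simpa using h1.symm
  have hcard2 : Fintype.card s = n := by rwa [Set.toFinset_card] at hcard
  obtain ⟨e⟩ : Nonempty (Fin n ≃ s) := ⟨(Fintype.equivFinOfCardEq hcard2).symm⟩
  have hchoice : ∀ x : s, ∃ i : Fin m, Mᵀ i = x.1 := fun x => hs_sub x.2
  choose g hg using hchoice
  refine ⟨g ∘ e, ?_⟩
  have hli : LinearIndependent K (fun l : Fin n => (M.submatrix id (g ∘ e))ᵀ l) := by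
    have heq : (fun l : Fin n => (M.submatrix id (g ∘ e))ᵀ l) = fun l => (e l).1 := by
      ext l i
      have := congrFun (hg (e l)) i
      simpa [Matrix.transpose, Matrix.submatrix] using this
    rw [heq]
    exact hs_li.comp e e.injective
  have := Matrix.linearIndependent_cols_iff_isUnit.mp hli
  rw [Matrix.isUnit_iff_isUnit_det, isUnit_iff_ne_zero] at this
  exact this

lemma linearIndependent_of_submatrix_det_ne_zero {K : Type*} [Field K] {n m : ℕ}
    (M : Matrix (Fin n) (Fin m) K) (g : Fin n → Fin m)
    (h : (M.submatrix id g).det ≠ 0) : LinearIndependent K M := by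
  have hU : IsUnit (M.submatrix id g) := by
    rw [Matrix.isUnit_iff_isUnit_det, isUnit_iff_ne_zero]; exact h
  have hrows : LinearIndependent K (fun k => (M.submatrix id g) k) :=
    Matrix.linearIndependent_rows_iff_isUnit.mpr hU
  have : (fun k => (M.submatrix id g) k)
      = (LinearMap.funLeft K K g) ∘ M := by
    ext k i; rfl
  rw [this] at hrows
  exact hrows.of_comp _

section coords
variable {Z : Type*} [Field Z] {D : Type*} [DivisionRing D] [Algebra Z D]
  {R : Type*} [CommRing R] [Algebra Z R]
  {ι : Type*} [Fintype ι] [DecidableEq ι]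

noncomputable def coordAux (b : Basis ι Z D) : D →ₗ[Z] R →ₗ[Z] (ι → R) where
  toFun d :=
    { toFun := fun r i => b.repr d i • r
      map_add' := fun r s => by ext i; simp [smul_add]
      map_smul' := fun z r => by ext i; exact (smul_comm _ _ _) }
  map_add' d e := by ext r i; simp [add_smul]
  map_smul' z d := by ext r i; simp [mul_smul]

lemma tensor_smul_def (r : R) (x : D ⊗[Z] R) : r • x = (1 ⊗ₜ[Z] r) * x := by
  rw [Algebra.smul_def]; rfl

noncomputable def coordFwd (b : Basis ι Z D) : (D ⊗[Z] R) →ₗ[Z] (ι → R) :=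
  TensorProduct.lift (coordAux b)

@[simp] lemma coordFwd_tmul (b : Basis ι Z D) (d : D) (s : R) :
    coordFwd b (d ⊗ₜ[Z] s) = fun i => b.repr d i • s := rfl

lemma coordFwd_smul (b : Basis ι Z D) (r : R) (x : D ⊗[Z] R) :
    coordFwd b (r • x) = r • coordFwd b x := by
  induction x using TensorProduct.induction_on with
  | zero => simp
  | tmul d s =>
      rw [tensor_smul_def, Algebra.TensorProduct.tmul_mul_tmul, one_mul]
      ext i
      simp only [coordFwd_tmul, Pi.smul_apply, Algebra.smul_def, smul_eq_mul,
        Algebra.algebraMap_self_apply]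
      ring
  | add x y hx hy => simp only [smul_add, map_add, hx, hy]

noncomputable def tensorCoord (b : Basis ι Z D) : (D ⊗[Z] R) ≃ₗ[R] (ι → R) := by
  refine LinearEquiv.ofLinear
    { toFun := coordFwd b
      map_add' := map_add _
      map_smul' := coordFwd_smul b }
    (∑ i, (LinearMap.toSpanSingleton R (D ⊗[Z] R) ((b i) ⊗ₜ[Z] (1:R))).comp (LinearMap.proj i))
    ?_ ?_
  · refine LinearMap.ext fun g => ?_
    simp only [LinearMap.comp_apply, LinearMap.sum_apply, LinearMap.coe_mk, AddHom.coe_mk,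
      LinearMap.toSpanSingleton_apply, LinearMap.proj_apply, LinearMap.id_apply]
    rw [map_sum]
    ext i
    have : ∀ j, coordFwd b ((g j) • ((b j) ⊗ₜ[Z] (1:R))) i
        = (if j = i then g j else 0) := by
      intro j
      rw [coordFwd_smul]
      by_cases hj : j = i
      · subst hj; simp
      · simp [hj, Finsupp.single_apply]
    simp only [Finset.sum_apply, this, Finset.sum_ite_eq', Finset.mem_univ, if_true]
  · refine LinearMap.ext fun x => ?_
    simp only [LinearMap.comp_apply, LinearMap.sum_apply, LinearMap.coe_mk, AddHom.coe_mk,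
      LinearMap.toSpanSingleton_apply, LinearMap.proj_apply, LinearMap.id_apply]
    induction x using TensorProduct.induction_on with
    | zero => simp
    | tmul d s =>
        simp only [coordFwd_tmul]
        have : ∀ i, (b.repr d i • s) • ((b i) ⊗ₜ[Z] (1:R)) = (b.repr d i • b i) ⊗ₜ[Z] s := by
          intro i
          rw [tensor_smul_def, Algebra.TensorProduct.tmul_mul_tmul, one_mul, mul_one,
            ← TensorProduct.smul_tmul]
        rw [Fintype.sum_congr _ _ this, ← TensorProduct.sum_tmul, Basis.sum_repr]
    | add x y hx hy => simp only [map_add, Pi.add_apply, add_smul, Finset.sum_add_distrib, hx, hy]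

@[simp] lemma tensorCoord_tmul (b : Basis ι Z D) (d : D) (s : R) :
    tensorCoord b (d ⊗ₜ[Z] s) = fun i => b.repr d i • s := rfl

lemma tensorCoord_symm_apply (b : Basis ι Z D) (g : ι → R) :
    (tensorCoord b).symm g = ∑ i, (b i) ⊗ₜ[Z] (g i) := by
  simp only [tensorCoord, LinearEquiv.ofLinear_symm_apply, LinearMap.coe_sum,
    Finset.sum_apply, LinearMap.coe_comp, Function.comp_apply,
    LinearMap.toSpanSingleton_apply, LinearMap.proj_apply]
  congr 1
  ext i
  rw [tensor_smul_def, Algebra.TensorProduct.tmul_mul_tmul, one_mul, mul_one]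
end coords

section compat
variable (Z : Type*) [Field Z] (D : Type*) [DivisionRing D] [Algebra Z D]
    (q : ℕ) (ZX : Type*) [Field ZX] [Algebra (MvPolynomial (Fin q) Z) ZX]
    [Algebra Z ZX] [IsScalarTower Z (MvPolynomial (Fin q) Z) ZX]
    {ι : Type*} [Fintype ι] [DecidableEq ι] (b : Basis ι Z D)

lemma coord_polyIncl (w : D ⊗[Z] MvPolynomial (Fin q) Z) (i : ι) :
    tensorCoord b (polyIncl Z D q ZX w) i
      = algebraMap (MvPolynomial (Fin q) Z) ZX (tensorCoord b w i) := by
  induction w using TensorProduct.induction_on with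
  | zero =>
      rw [map_zero, (tensorCoord b).map_zero, (tensorCoord b).map_zero]
      simp
  | tmul d p =>
      simp only [polyIncl, Algebra.TensorProduct.map_tmul, AlgHom.coe_id, id_eq,
        IsScalarTower.coe_toAlgHom', tensorCoord_tmul, Algebra.smul_def]
      rw [_root_.map_mul, ← IsScalarTower.algebraMap_apply]
  | add x y hx hy =>
      rw [map_add, (tensorCoord b).map_add, (tensorCoord b).map_add]
      simp only [Pi.add_apply, hx, hy, map_add]

lemma specHom_eq (lam : Fin q → Z) (w : D ⊗[Z] MvPolynomial (Fin q) Z) :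
    specHom Z D q lam w
      = b.equivFun.symm (fun i => MvPolynomial.eval lam (tensorCoord b w i)) := by
  induction w using TensorProduct.induction_on with
  | zero =>
      rw [map_zero, (tensorCoord b).map_zero]
      have : (fun i => MvPolynomial.eval lam ((0 : ι → MvPolynomial (Fin q) Z) i))
          = (0 : ι → Z) := by
        funext i; rw [Pi.zero_apply, Pi.zero_apply, map_zero]
      rw [this, b.equivFun.symm.map_zero]
  | tmul d p =>
      rw [Basis.equivFun_symm_apply]
      simp only [specHom, Algebra.TensorProduct.lift_tmul, AlgHom.coe_id, id_eq,
        AlgHom.coe_comp, Function.comp_apply, tensorCoord_tmul]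
      have h1 : (Algebra.ofId Z D) ((MvPolynomial.aeval lam) p)
          = algebraMap Z D (MvPolynomial.eval lam p) := by
        rw [Algebra.ofId_apply]
        congr 1
      erw [Algebra.TensorProduct.lift_tmul]
      simp only [AlgHom.coe_id, id_eq, AlgHom.coe_comp, Function.comp_apply]
      rw [h1]
      have h2 : ∀ i, MvPolynomial.eval lam (b.repr d i • p) • b i
          = (MvPolynomial.eval lam p) • (b.repr d i • b i) := by
        intro i
        rw [MvPolynomial.smul_eq_C_mul, _root_.map_mul, MvPolynomial.eval_C, mul_comm, mul_smul]
      rw [Fintype.sum_congr _ _ h2, ← Finset.smul_sum, Basis.sum_repr]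
      rw [Algebra.smul_def, ← Algebra.commutes]
  | add x y hx hy =>
      rw [map_add, hx, hy, ← b.equivFun.symm.map_add]
      congr 1
      funext i
      rw [Pi.add_apply, (tensorCoord b).map_add, Pi.add_apply, map_add]
end compat

/-- Let `D` be a division ring finite-dimensional over its infinite centre `Z`, and let
`V ⊆ D(X)` be a `Z(X)`-subspace of dimension `n`. Then there is a nonzero `f ∈ Z[X]` such
that for every `λ ∈ Z^q` with `f(λ) ≠ 0`, the specialization `V̄_λ = π_λ(V ∩ D[X])` is a
`Z`-subspace of `D` of dimension `n`. -/
theorem generic_dimension_of_specialization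
    (Z : Type*) [Field Z] [Infinite Z] (D : Type*) [DivisionRing D] [Algebra Z D]
    (hcent : Set.range (algebraMap Z D) = Set.center D)
    [FiniteDimensional Z D]
    (q : ℕ) (ZX : Type*) [Field ZX] [Algebra (MvPolynomial (Fin q) Z) ZX]
    [IsFractionRing (MvPolynomial (Fin q) Z) ZX]
    [Algebra Z ZX] [IsScalarTower Z (MvPolynomial (Fin q) Z) ZX]
    (V : Submodule ZX (D ⊗[Z] ZX)) (n : ℕ) (hV : Module.finrank ZX V = n) :
    ∃ f : MvPolynomial (Fin q) Z, f ≠ 0 ∧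
      ∀ lam : Fin q → Z, MvPolynomial.eval lam f ≠ 0 →
        Module.finrank Z (specSubmodule Z D q ZX V lam) = n := by
  classical
  set R := MvPolynomial (Fin q) Z with hR
  set m := finrank Z D with hm
  let b : Basis (Fin m) Z D := finBasis Z D
  let E : (D ⊗[Z] ZX) ≃ₗ[ZX] (Fin m → ZX) := tensorCoord b
  let EP : (D ⊗[Z] R) ≃ₗ[R] (Fin m → R) := tensorCoord b
  haveI : FiniteDimensional ZX (D ⊗[Z] ZX) := Module.Finite.equiv E.symm
  have hdim : finrank ZX (D ⊗[Z] ZX) = m := by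
    rw [E.finrank_eq]; simp [Module.finrank_fin_fun]
  have hnm : n ≤ m := by
    rw [← hV, ← hdim]; exact Submodule.finrank_le V
  -- basis of V, pushed into the ambient space
  let v : Basis (Fin n) ZX V := (finBasis ZX V).reindex (finCongr (by rw [hV]))
  let vv : Fin n → D ⊗[Z] ZX := fun k => (v k : D ⊗[Z] ZX)
  have hvv_mem : ∀ k, vv k ∈ V := fun k => (v k).2
  have hvv_li : LinearIndependent ZX vv := v.linearIndependent.map' V.subtype V.ker_subtype
  have hvv_span : Submodule.span ZX (Set.range vv) = V := by
    have h1 : Submodule.map V.subtype (Submodule.span ZX (Set.range ⇑v)) = V := by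
      rw [v.span_eq, Submodule.map_top, Submodule.range_subtype]
    rw [Submodule.map_span] at h1
    rw [← h1, ← Set.range_comp]
    rfl
  -- clear denominators for the basis of V
  obtain ⟨dd, hdd⟩ := IsLocalization.exist_integer_multiples_of_finite
    (nonZeroDivisors R) (fun p : Fin n × Fin m => E (vv p.1) p.2)
  have hdd' : ∀ (k : Fin n) (i : Fin m), ∃ p : R,
      algebraMap R ZX p = (dd : R) • E (vv k) i := fun k i => hdd (k, i)
  choose P hP using hdd'
  have hδ : algebraMap R ZX (dd : R) ≠ 0 :=
    IsFractionRing.to_map_ne_zero_of_mem_nonZeroDivisors dd.2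
  let x : Fin n → D ⊗[Z] ZX := fun k => (algebraMap R ZX (dd : R)) • vv k
  have hx_mem : ∀ k, x k ∈ V := fun k => V.smul_mem _ (hvv_mem k)
  have hx_coord : ∀ k, E (x k) = fun i => algebraMap R ZX (P k i) := by
    intro k; funext i
    calc E (x k) i = algebraMap R ZX (dd : R) * E (vv k) i := by
          rw [E.map_smul]; rfl
    _ = algebraMap R ZX (P k i) := by rw [hP k i, Algebra.smul_def]
  have hx_li : LinearIndependent ZX x := by
    have h := hvv_li.units_smul (fun _ : Fin n => Units.mk0 (algebraMap R ZX (dd : R)) hδ)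
    convert h using 1
    funext k; rfl
  have hx_span : Submodule.span ZX (Set.range x) = V := by
    apply le_antisymm
    · rw [Submodule.span_le]; rintro _ ⟨k, rfl⟩; exact hx_mem k
    · rw [← hvv_span, Submodule.span_le]
      rintro _ ⟨k, rfl⟩
      have hvk : vv k = (algebraMap R ZX (dd : R))⁻¹ • x k := by
        rw [smul_smul, inv_mul_cancel₀ hδ, one_smul]
      rw [hvk]
      exact Submodule.smul_mem _ _ (Submodule.subset_span ⟨k, rfl⟩)
  -- integral representatives
  let u : Fin n → D ⊗[Z] R := fun k => EP.symm (fun i => P k i)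
  have hEP_u : ∀ k, EP (u k) = fun i => P k i := fun k => EP.apply_symm_apply _
  have hpoly_u : ∀ k, polyIncl Z D q ZX (u k) = x k := by
    intro k
    apply E.injective
    funext i
    rw [show E (polyIncl Z D q ZX (u k)) i
        = algebraMap R ZX (EP (u k) i) from coord_polyIncl Z D q ZX b (u k) i,
      hEP_u k, hx_coord k]
  -- the coordinate matrix of the basis and a nonvanishing minor
  let Pm : Matrix (Fin n) (Fin m) R := Matrix.of fun k i => P k i
  have hProws : LinearIndependent ZX (Pm.map (algebraMap R ZX)) := by
    have h1 : LinearIndependent ZX (fun k => E (x k)) :=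
      hx_li.map' E.toLinearMap E.ker
    have h2 : (fun k => E (x k)) = Pm.map (algebraMap R ZX) := by
      funext k; exact hx_coord k
    rwa [h2] at h1
  obtain ⟨g, hg⟩ := exists_submatrix_det_ne_zero' _ hProws
  set G : R := (Pm.submatrix id g).det with hGdef
  have hG0 : G ≠ 0 := by
    intro h0
    apply hg
    have h1 : (Pm.map (algebraMap R ZX)).submatrix id g
        = (algebraMap R ZX : R →+* ZX).mapMatrix (Pm.submatrix id g) := rfl
    rw [h1, ← RingHom.map_det, ← hGdef, h0, map_zero]
  -- the annihilator of V, with integral coefficients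
  set r : ℕ := m - n with hrdef
  have hrn : n + r = m := by omega
  let W : Submodule ZX (Fin m → ZX) := V.map (E : (D ⊗[Z] ZX) →ₗ[ZX] (Fin m → ZX))
  have hWrank : finrank ZX W = n := by
    rw [LinearEquiv.finrank_map_eq E V, hV]
  have hQdim : finrank ZX ((Fin m → ZX) ⧸ W) = r := by
    have h1 := Submodule.finrank_quotient_add_finrank W
    rw [hWrank] at h1
    have h2 : finrank ZX (Fin m → ZX) = m := by simp [Module.finrank_fin_fun]
    omega
  have hDualdim : finrank ZX (Module.Dual ZX ((Fin m → ZX) ⧸ W)) = r := by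
    rw [Subspace.dual_finrank_eq, hQdim]
  let ψ : Basis (Fin r) ZX (Module.Dual ZX ((Fin m → ZX) ⧸ W)) :=
    (finBasis ZX _).reindex (finCongr hDualdim)
  let χ : Fin r → ((Fin m → ZX) →ₗ[ZX] ZX) := fun k => (ψ k).comp W.mkQ
  have hχ_W : ∀ k, ∀ w ∈ W, χ k w = 0 := by
    intro k w hw
    have : W.mkQ w = 0 := (Submodule.Quotient.mk_eq_zero W).mpr hw
    simp only [χ, LinearMap.comp_apply, this, map_zero]
  have hχ_li : LinearIndependent ZX χ := by
    have h1 : LinearIndependent ZX ψ := ψ.linearIndependent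
    have h2 : Function.Injective (W.mkQ.dualMap) :=
      LinearMap.dualMap_injective_of_surjective (Submodule.mkQ_surjective W)
    have h3 := h1.map' W.mkQ.dualMap (LinearMap.ker_eq_bot.mpr h2)
    exact h3
  -- representation of functionals by vectors
  have hrepr : ∀ (φ : (Fin m → ZX) →ₗ[ZX] ZX) (vx : Fin m → ZX),
      φ vx = ∑ i, vx i * φ (Pi.single i 1) := by
    intro φ vx
    have h0 : vx = ∑ i, vx i • (Pi.single i (1 : ZX) : Fin m → ZX) := by
      funext j
      rw [Finset.sum_apply]
      simp [Pi.single_apply, eq_comm]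
    conv_lhs => rw [h0]
    rw [map_sum]
    refine Finset.sum_congr rfl fun i _ => ?_
    rw [_root_.map_smul, smul_eq_mul]
  let a' : Fin r → (Fin m → ZX) := fun k i => χ k (Pi.single i 1)
  have ha'_li : LinearIndependent ZX a' := by
    let κ : ((Fin m → ZX) →ₗ[ZX] ZX) →ₗ[ZX] (Fin m → ZX) :=
      LinearMap.pi (fun i => LinearMap.applyₗ (Pi.single i 1))
    have hκ : Function.Injective κ := by
      rw [← LinearMap.ker_eq_bot, LinearMap.ker_eq_bot']
      intro φ hφ
      refine LinearMap.ext fun vx => ?_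
      rw [LinearMap.zero_apply, hrepr φ vx]
      have : ∀ i, φ (Pi.single i 1) = 0 := fun i => congrFun hφ i
      simp [this]
    have h4 := hχ_li.map' κ (LinearMap.ker_eq_bot.mpr hκ)
    exact h4
  -- clear denominators of the annihilator
  obtain ⟨dd₂, hdd₂⟩ := IsLocalization.exist_integer_multiples_of_finite
    (nonZeroDivisors R) (fun p : Fin r × Fin m => a' p.1 p.2)
  have hdd₂' : ∀ (k : Fin r) (i : Fin m), ∃ p : R,
      algebraMap R ZX p = (dd₂ : R) • a' k i := fun k i => hdd₂ (k, i)
  choose A hA using hdd₂'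
  have hδ₂ : algebraMap R ZX (dd₂ : R) ≠ 0 :=
    IsFractionRing.to_map_ne_zero_of_mem_nonZeroDivisors dd₂.2
  let Am : Matrix (Fin r) (Fin m) R := Matrix.of fun k i => A k i
  have hArows_eq : ∀ k, (Am.map (algebraMap R ZX)) k
      = algebraMap R ZX (dd₂ : R) • a' k := by
    intro k; funext i
    show algebraMap R ZX (A k i) = _
    rw [hA k i, Algebra.smul_def]; rfl
  have hArows : LinearIndependent ZX (Am.map (algebraMap R ZX)) := by
    have h := ha'_li.units_smul (fun _ : Fin r => Units.mk0 (algebraMap R ZX (dd₂ : R)) hδ₂)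
    have h2 : (Am.map (algebraMap R ZX))
        = (fun _ : Fin r => Units.mk0 (algebraMap R ZX (dd₂ : R)) hδ₂) • a' := by
      funext k; exact hArows_eq k
    rwa [h2]
  obtain ⟨h, hh⟩ := exists_submatrix_det_ne_zero' _ hArows
  set H : R := (Am.submatrix id h).det with hHdef
  have hH0 : H ≠ 0 := by
    intro h0
    apply hh
    have h1 : (Am.map (algebraMap R ZX)).submatrix id h
        = (algebraMap R ZX : R →+* ZX).mapMatrix (Am.submatrix id h) := rfl
    rw [h1, ← RingHom.map_det, ← hHdef, h0, map_zero]
  -- the annihilator kills V, over R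
  have hann : ∀ (k : Fin r) (w : D ⊗[Z] R), polyIncl Z D q ZX w ∈ V →
      ∑ i, EP w i * A k i = 0 := by
    intro k w hw
    have h1 : E (polyIncl Z D q ZX w) ∈ W := Submodule.mem_map_of_mem hw
    have h2 : χ k (E (polyIncl Z D q ZX w)) = 0 := hχ_W k _ h1
    rw [hrepr] at h2
    have h3 : ∑ i, E (polyIncl Z D q ZX w) i * ((dd₂ : R) • a' k i) = 0 := by
      have := congrArg (fun t => algebraMap R ZX (dd₂ : R) * t) h2
      simpa [Finset.mul_sum, Algebra.smul_def, mul_assoc, mul_left_comm] using this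
    have h4 : algebraMap R ZX (∑ i, EP w i * A k i) = 0 := by
      rw [map_sum, ← h3]
      refine Finset.sum_congr rfl fun i _ => ?_
      rw [_root_.map_mul, coord_polyIncl Z D q ZX b w i, hA k i]
    exact IsFractionRing.injective R ZX (by rw [h4, map_zero])
  -- the polynomial
  refine ⟨G * H, mul_ne_zero hG0 hH0, ?_⟩
  intro lam hlam
  rw [_root_.map_mul] at hlam
  have hGl : MvPolynomial.eval lam G ≠ 0 := left_ne_zero_of_mul hlam
  have hHl : MvPolynomial.eval lam H ≠ 0 := right_ne_zero_of_mul hlam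
  set S := specSubmodule Z D q ZX V lam with hSdef
  -- lower bound
  let Pl : Matrix (Fin n) (Fin m) Z := Matrix.of fun k i => MvPolynomial.eval lam (P k i)
  have hPl_li : LinearIndependent Z Pl := by
    apply linearIndependent_of_submatrix_det_ne_zero Pl g
    have h1 : Pl.submatrix id g
        = (MvPolynomial.eval lam : R →+* Z).mapMatrix (Pm.submatrix id g) := rfl
    rw [h1, ← RingHom.map_det, ← hGdef]
    exact hGl
  let y : Fin n → D := fun k => specHom Z D q lam (u k)
  have hy_eq : ∀ k, y k = b.equivFun.symm (Pl k) := by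
    intro k
    show specHom Z D q lam (u k) = _
    rw [specHom_eq Z D q b lam (u k)]
    congr 1
    funext i
    rw [hEP_u k]
    rfl
  have hy_li : LinearIndependent Z y := by
    have h1 : LinearIndependent Z (fun k => b.equivFun.symm (Pl k)) :=
      hPl_li.map' b.equivFun.symm.toLinearMap b.equivFun.symm.ker
    have h2 : y = fun k => b.equivFun.symm (Pl k) := funext fun k => hy_eq k
    rwa [h2]
  have hy_mem : ∀ k, y k ∈ S := by
    intro k
    refine ⟨u k, ?_, rfl⟩
    show polyIncl Z D q ZX (u k) ∈ V
    rw [hpoly_u k]; exact hx_mem k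
  have hlow : n ≤ finrank Z S := by
    have h1 : LinearIndependent Z (fun k => (⟨y k, hy_mem k⟩ : S)) := by
      apply LinearIndependent.of_comp S.subtype
      exact hy_li
    simpa using h1.fintype_card_le_finrank
  -- upper bound
  let Al : Matrix (Fin r) (Fin m) Z := Matrix.of fun k i => MvPolynomial.eval lam (A k i)
  have hAl_li : LinearIndependent Z Al := by
    apply linearIndependent_of_submatrix_det_ne_zero Al h
    have h1 : Al.submatrix id h
        = (MvPolynomial.eval lam : R →+* Z).mapMatrix (Am.submatrix id h) := rfl
    rw [h1, ← RingHom.map_det, ← hHdef]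
    exact hHl
  let L : D →ₗ[Z] (Fin r → Z) :=
    Al.mulVecLin ∘ₗ (b.equivFun : D ≃ₗ[Z] (Fin m → Z)).toLinearMap
  have hSle : S ≤ LinearMap.ker L := by
    rintro s ⟨w, hw, rfl⟩
    have hw' : polyIncl Z D q ZX w ∈ V := hw
    rw [LinearMap.mem_ker]
    show Al.mulVecLin (b.equivFun ((specHom Z D q lam).toLinearMap w)) = 0
    have hcoord : b.equivFun ((specHom Z D q lam).toLinearMap w)
        = fun i => MvPolynomial.eval lam (EP w i) := by
      show b.equivFun (specHom Z D q lam w) = _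
      rw [specHom_eq Z D q b lam w, LinearEquiv.apply_symm_apply]
    rw [hcoord]
    funext k
    have h6 : ∑ i, MvPolynomial.eval lam (EP w i) * MvPolynomial.eval lam (A k i) = 0 := by
      have h7 := congrArg (MvPolynomial.eval lam) (hann k w hw')
      rw [map_sum, map_zero] at h7
      rw [← h7]
      refine Finset.sum_congr rfl fun i _ => ?_
      rw [_root_.map_mul]
    show ∑ i, Al k i * MvPolynomial.eval lam (EP w i) = 0
    rw [← h6]
    refine Finset.sum_congr rfl fun i _ => ?_
    rw [mul_comm]
    rfl
  have hker : finrank Z (LinearMap.ker L) = n := by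
    have h1 := LinearMap.finrank_range_add_finrank_ker L
    have h2 : LinearMap.range L = LinearMap.range Al.mulVecLin := by
      show LinearMap.range (Al.mulVecLin ∘ₗ _) = _
      rw [LinearMap.range_comp, LinearEquiv.range, Submodule.map_top]
    have h4 : Al.rank = r := by simpa using hAl_li.rank_matrix
    have h3 : finrank Z (LinearMap.range Al.mulVecLin) = r := h4
    rw [h2, h3] at h1
    omega
  have hup : finrank Z S ≤ n := by
    rw [← hker]
    exact Submodule.finrank_mono hSle
  omega
end

section
/- Let G be a finite-dimensional Lie algebra over a field F of characteristic p > 0 equipped with a map x ↦ x^{[p]} satisfying ad(x^{[p]}) = (ad x)^p for all x ∈ G, and let L ⊆ G be a Lie subalgebra such that the only Lie subalgebra of G containing L and closed under x ↦ x^{[p]} is G itself (G is a p-envelope of L). Set q = dim_F G − dim_F L. Then there exists a chain of Lie ideals of G, L = L_0 ⊆ L_1 ⊆ ⋯ ⊆ L_q = G, together with elements x_1,…,x_q ∈ G and y_0,…,y_{q−1} with y_{i−1} ∈ L_{i−1}, such that for every i ∈ {1,…,q}: L_i = L_{i−1} + F·x_i with x_i ∉ L_{i−1}, and x_i = y_{i−1}^{[p]}.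 -/
open Module

section Aux

variable (p : ℕ) (F : Type*) [Field F]
    (G : Type*) [LieRing G] [LieAlgebra F G] [FiniteDimensional F G]
    (pmap : G → G) (L : LieSubalgebra F G)

lemma aux_chain (hp : p ≠ 0)
    (hpmap : ∀ x : G, LieAlgebra.ad F G (pmap x) = (LieAlgebra.ad F G x) ^ p)
    (henv : ∀ S : LieSubalgebra F G, L ≤ S → (∀ x ∈ S, pmap x ∈ S) → S = ⊤) :
    ∀ (n : ℕ) (I : LieIdeal F G), (L : Set G) ⊆ I →
      finrank F I.toSubmodule + n = finrank F G →
      ∃ (Lc : Fin (n + 1) → LieIdeal F G) (x y : Fin n → G),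
        (Lc 0 = I) ∧
        ((Lc (Fin.last n) : Set G) = Set.univ) ∧
        ∀ i : Fin n,
          x i ∉ Lc i.castSucc ∧
          ((Lc i.succ : Set G) = {g : G | ∃ c : F, ∃ h ∈ Lc i.castSucc, g = c • x i + h}) ∧
          y i ∈ Lc i.castSucc ∧
          pmap (y i) = x i := by
  intro n
  induction n with
  | zero =>
    intro I hLI hrank
    have htop : I.toSubmodule = ⊤ := Submodule.eq_top_of_finrank_eq (by simpa using hrank)
    refine ⟨fun _ => I, ![], ![], rfl, ?_, fun i => i.elim0⟩
    ext g
    simp only [Set.mem_univ, iff_true, SetLike.mem_coe]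
    show g ∈ I.toSubmodule
    rw [htop]; trivial
  | succ n IH =>
    intro I hLI hrank
    -- I is not closed under pmap
    have hnot : ¬ (∀ z ∈ I, pmap z ∈ I) := by
      intro hcl
      have hS : LieIdeal.toLieSubalgebra F G I = ⊤ := henv _ (fun z hz => hLI hz) hcl
      have htop : I.toSubmodule = ⊤ := by
        have := congrArg (fun S : LieSubalgebra F G => S.toSubmodule) hS
        simpa using this
      have : finrank F I.toSubmodule = finrank F G := by rw [htop]; exact finrank_top F G
      omega
    push_neg at hnot
    obtain ⟨y0, hy0I, hx0⟩ := hnot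
    set x0 : G := pmap y0 with hx0def
    -- bracket of x0 with anything lands in I
    have hbr : ∀ g : G, ⁅x0, g⁆ ∈ I := by
      intro g
      have heq : ⁅x0, g⁆ = ((LieAlgebra.ad F G y0) ^ p) g := by
        rw [← hpmap y0]; rfl
      rw [heq]
      obtain ⟨k, rfl⟩ : ∃ k, p = k + 1 := ⟨p - 1, by omega⟩
      rw [pow_succ', Module.End.mul_apply]
      exact lie_mem_left F G I y0 _ hy0I
    -- the new ideal J
    have Jlie : ∀ (g m : G), m ∈ I.toSubmodule ⊔ (F ∙ x0) → ⁅g, m⁆ ∈ I.toSubmodule ⊔ (F ∙ x0) := by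
      intro g m hm
      obtain ⟨a, ha, b, hb, rfl⟩ := Submodule.mem_sup.mp hm
      obtain ⟨c, rfl⟩ := Submodule.mem_span_singleton.mp hb
      have h1 : ⁅g, a⁆ ∈ I := lie_mem_right F G I g a ha
      have h2 : ⁅g, x0⁆ ∈ I := by
        rw [← lie_skew]
        exact I.neg_mem (hbr g)
      have : ⁅g, a + c • x0⁆ = ⁅g, a⁆ + c • ⁅g, x0⁆ := by
        rw [lie_add, lie_smul]
      rw [this]
      exact Submodule.mem_sup_left (I.add_mem h1 (I.smul_mem c h2))
    set J : LieIdeal F G := { toSubmodule := I.toSubmodule ⊔ (F ∙ x0),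
                              lie_mem := fun {g m} hm => Jlie g m hm } with hJdef
    have hJmem : ∀ g : G, g ∈ J ↔ g ∈ I.toSubmodule ⊔ (F ∙ x0) := fun _ => Iff.rfl
    have hIJ : I ≤ J := fun z hz => Submodule.mem_sup_left hz
    have hx0J : x0 ∈ J := Submodule.mem_sup_right (Submodule.mem_span_singleton_self x0)
    have hx0ne : x0 ≠ 0 := fun h => hx0 (h ▸ I.zero_mem)
    have hdisj : Disjoint I.toSubmodule (F ∙ x0) := by
      rw [disjoint_iff_inf_le]
      intro z ⟨hz1, hz2⟩
      obtain ⟨c, rfl⟩ := Submodule.mem_span_singleton.mp hz2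
      rcases eq_or_ne c 0 with rfl | hc
      · simp
      · exact absurd (by simpa [smul_smul, inv_mul_cancel₀ hc] using I.smul_mem c⁻¹ hz1) hx0
    have hrankJ : finrank F J.toSubmodule = finrank F I.toSubmodule + 1 := by
      have := Submodule.finrank_sup_add_finrank_inf_eq I.toSubmodule (F ∙ x0)
      rw [hdisj.eq_bot, finrank_bot, add_zero, finrank_span_singleton hx0ne] at this
      exact this
    obtain ⟨Lc', x', y', h0', hlast', hstep'⟩ :=
      IH J (fun z hz => hIJ (hLI hz)) (by omega)
    refine ⟨Fin.cases I Lc', Fin.cases x0 x', Fin.cases y0 y', by simp, ?_, ?_⟩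
    · rw [← Fin.succ_last]
      simp only [Fin.cases_succ]
      exact hlast'
    · intro i
      induction i using Fin.cases with
      | zero =>
        refine ⟨?_, ?_, ?_, ?_⟩
        · simp only [Fin.castSucc_zero, Fin.cases_zero]; exact hx0
        · simp only [Fin.cases_succ, Fin.castSucc_zero, Fin.cases_zero, h0']
          ext g
          constructor
          · intro hg
            obtain ⟨a, ha, b, hb, rfl⟩ := Submodule.mem_sup.mp hg
            obtain ⟨c, rfl⟩ := Submodule.mem_span_singleton.mp hb
            exact ⟨c, a, ha, by abel⟩
          · rintro ⟨c, h, hh, rfl⟩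
            exact Submodule.add_mem _ (Submodule.mem_sup_right
              (Submodule.mem_span_singleton.mpr ⟨c, rfl⟩)) (Submodule.mem_sup_left hh)
        · simp only [Fin.castSucc_zero, Fin.cases_zero]; exact hy0I
        · simp only [Fin.cases_zero]; rfl
      | succ j =>
        obtain ⟨ha, hb, hc, hd⟩ := hstep' j
        refine ⟨?_, ?_, ?_, ?_⟩
        · rw [← Fin.succ_castSucc]; simp only [Fin.cases_succ]; exact ha
        · rw [← Fin.succ_castSucc]; simp only [Fin.cases_succ]; exact hb
        · rw [← Fin.succ_castSucc]; simp only [Fin.cases_succ]; exact hc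
        · simp only [Fin.cases_succ]; exact hd

end Aux

/-- Let `G` be a finite-dimensional Lie algebra over a field `F` of characteristic `p > 0`
equipped with a map `x ↦ x^[p]` satisfying `ad (x^[p]) = (ad x)^p`, and let `L ⊆ G` be a Lie
subalgebra such that the only Lie subalgebra of `G` containing `L` and closed under the
`p`-map is `G` itself (`G` is a `p`-envelope of `L`). With `q = dim G − dim L`, there is a
chain of Lie ideals `L = L_0 ⊆ L_1 ⊆ ⋯ ⊆ L_q = G` and elements `x_1,…,x_q`, `y_0,…,y_{q−1}`
with `y_{i−1} ∈ L_{i−1}`, such that `L_i = L_{i−1} + F·x_i` with `x_i ∉ L_{i−1}` and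
`x_i = y_{i−1}^[p]`. -/
theorem p_envelope_ideal_chain
    (p : ℕ) (hp : p ≠ 0)
    (F : Type*) [Field F] [CharP F p]
    (G : Type*) [LieRing G] [LieAlgebra F G] [FiniteDimensional F G]
    (pmap : G → G)
    (hpmap : ∀ x : G, LieAlgebra.ad F G (pmap x) = (LieAlgebra.ad F G x) ^ p)
    (L : LieSubalgebra F G)
    (henv : ∀ S : LieSubalgebra F G, L ≤ S → (∀ x ∈ S, pmap x ∈ S) → S = ⊤)
    (q : ℕ) (hq : q = Module.finrank F G - Module.finrank F L) :
    ∃ (Lc : Fin (q + 1) → LieIdeal F G) (x y : Fin q → G),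
      ((Lc 0 : Set G) = (L : Set G)) ∧
      ((Lc (Fin.last q) : Set G) = Set.univ) ∧
      ∀ i : Fin q,
        x i ∉ Lc i.castSucc ∧
        ((Lc i.succ : Set G) = {g : G | ∃ c : F, ∃ h ∈ Lc i.castSucc, g = c • x i + h}) ∧
        y i ∈ Lc i.castSucc ∧
        pmap (y i) = x i := by
  classical
  -- Step 1: L is an ideal of G
  have hLideal : ∀ (g z : G), z ∈ L → ⁅g, z⁆ ∈ L := by
    have hN : L.normalizer = ⊤ := by
      apply henv _ L.le_normalizer
      intro x hx
      rw [LieSubalgebra.mem_normalizer_iff] at hx ⊢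
      have key : ∀ (k : ℕ) (z : G), z ∈ L → ((LieAlgebra.ad F G x) ^ k) z ∈ L := by
        intro k
        induction k with
        | zero => intro z hz; simpa using hz
        | succ k ih =>
          intro z hz
          rw [pow_succ, Module.End.mul_apply]
          exact ih _ (hx z hz)
      intro z hz
      have : ⁅pmap x, z⁆ = ((LieAlgebra.ad F G x) ^ p) z := by rw [← hpmap x]; rfl
      rw [this]
      exact key p z hz
    intro g z hz
    have hg : g ∈ L.normalizer := hN ▸ trivial
    exact (L.mem_normalizer_iff g).mp hg z hz
  set I₀ : LieIdeal F G := { toSubmodule := L.toSubmodule,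
                             lie_mem := fun {g z} hz => hLideal g z hz } with hI₀
  have hrank : Module.finrank F I₀.toSubmodule + q = Module.finrank F G := by
    have h1 : Module.finrank F I₀.toSubmodule = Module.finrank F L := rfl
    have h2 : Module.finrank F L ≤ Module.finrank F G := Submodule.finrank_le L.toSubmodule
    omega
  obtain ⟨Lc, x, y, h0, hlast, hstep⟩ :=
    aux_chain p F G pmap L hp hpmap henv q I₀ (fun z hz => hz) hrank
  exact ⟨Lc, x, y, by rw [h0]; rfl, hlast, hstep⟩
end
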